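/- Let E1,...,Em be events with P(E_i) ≤ p_i (not necessarily independent, but each with conditional probability ≤ p_i given any configuration of the others). Then the probability that at least two of them occur is at most Σ_{i<j} p_i p_j. -/

import Mathlib

open MeasureTheory ProbabilityTheory
open scoped ENNReal

section Aux

variable {Ω : Type*} [MeasurableSpace Ω]

private def atomSet (m : ℕ) (E : Fin m → Set Ω) (i : Fin m) (σ : Fin m → Bool) : Set Ω :=
  ⋂ j ∈ Finset.univ.erase i, (if σ j then E j else (E j)ᶜ)

private lemma atom_meas {m : ℕ} {E : Fin m → Set Ω} (hmeas : ∀ i, MeasurableSet (E i))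
    (i : Fin m) (σ : Fin m → Bool) : MeasurableSet (atomSet m E i σ) := by
  apply Finset.measurableSet_biInter
  intro j _
  by_cases h : σ j <;> simp [h, hmeas j, (hmeas j).compl]

private lemma atom_mem {m : ℕ} {E : Fin m → Set Ω} {i : Fin m} {σ : Fin m → Bool} {ω : Ω} :
    ω ∈ atomSet m E i σ ↔ ∀ j, j ≠ i → (σ j = true ↔ ω ∈ E j) := by
  simp only [atomSet, Set.mem_iInter, Finset.mem_erase, Finset.mem_univ, and_true]
  constructor
  · intro h j hj
    have := h j hj
    by_cases hσ : σ j = true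
    · simp only [hσ, if_true] at this; simp [hσ, this]
    · simp only [Bool.not_eq_true] at hσ
      simp only [hσ, Bool.false_eq_true, if_false] at this
      simp only [hσ, Bool.false_eq_true, false_iff]
      exact this
  · intro h j hj
    have := h j hj
    by_cases hσ : σ j = true
    · simp [hσ, this.mp hσ]
    · simp only [Bool.not_eq_true] at hσ
      simp only [hσ, Bool.false_eq_true, if_false]
      intro hmem
      exact absurd (this.mpr hmem) (by simp [hσ])

private lemma atom_disjoint {m : ℕ} {E : Fin m → Set Ω} {i : Fin m} {σ τ : Fin m → Bool}
    (hσ : σ i = true) (hτ : τ i = true) (hne : σ ≠ τ) :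
    Disjoint (atomSet m E i σ) (atomSet m E i τ) := by
  rw [Set.disjoint_left]
  intro ω hωσ hωτ
  apply hne
  funext k
  by_cases hk : k = i
  · rw [hk, hσ, hτ]
  · have h1 := (atom_mem.mp hωσ) k hk
    have h2 := (atom_mem.mp hωτ) k hk
    by_cases hs : σ k = true
    · rw [hs, (h2.mpr (h1.mp hs)).symm]
    · simp only [Bool.not_eq_true] at hs
      rw [hs]
      by_cases ht : τ k = true
      · exact absurd (h2.mp ht) (fun hm => by simp [h1.mpr hm] at hs)
      · simp only [Bool.not_eq_true] at ht; rw [ht]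

private lemma key (μ : Measure Ω) {m : ℕ} {E : Fin m → Set Ω}
    (hmeas : ∀ i, MeasurableSet (E i)) (i : Fin m) (c : ℝ≥0∞)
    (hcond : ∀ σ, μ (E i ∩ atomSet m E i σ) ≤ c * μ (atomSet m E i σ))
    (T : Finset (Fin m → Bool)) (hT : ∀ σ ∈ T, σ i = true) :
    μ (E i ∩ ⋃ σ ∈ T, atomSet m E i σ) ≤ c * μ (⋃ σ ∈ T, atomSet m E i σ) := by
  have hdisj : (T : Set (Fin m → Bool)).PairwiseDisjoint (atomSet m E i) := by
    intro σ hσ τ hτ hne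
    exact atom_disjoint (hT σ hσ) (hT τ hτ) hne
  rw [Set.inter_iUnion₂]
  calc μ (⋃ σ ∈ T, E i ∩ atomSet m E i σ)
      ≤ ∑ σ ∈ T, μ (E i ∩ atomSet m E i σ) := measure_biUnion_finset_le T _
    _ ≤ ∑ σ ∈ T, c * μ (atomSet m E i σ) := Finset.sum_le_sum fun σ _ => hcond σ
    _ = c * ∑ σ ∈ T, μ (atomSet m E i σ) := by rw [Finset.mul_sum]
    _ = c * μ (⋃ σ ∈ T, atomSet m E i σ) := by
        rw [measure_biUnion_finset hdisj fun σ _ => atom_meas hmeas i σ]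

private lemma union_atoms_true {m : ℕ} {E : Fin m → Set Ω} {i j : Fin m} (hij : j ≠ i) :
    (⋃ σ ∈ Finset.univ.filter (fun σ : Fin m → Bool => σ i = true ∧ σ j = true),
      atomSet m E i σ) = E j := by
  classical
  ext ω
  simp only [Set.mem_iUnion, Finset.mem_filter, Finset.mem_univ, true_and]
  constructor
  · rintro ⟨σ, ⟨_, hσj⟩, hω⟩
    exact (atom_mem.mp hω j hij).mp hσj
  · intro hω
    refine ⟨fun k => if k = i then true else decide (ω ∈ E k), ⟨by simp, ?_⟩, ?_⟩
    · simp [hij, hω]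
    · rw [atom_mem]
      intro k hk
      simp [hk]
  
private lemma union_atoms_univ {m : ℕ} {E : Fin m → Set Ω} (i : Fin m) :
    (⋃ σ ∈ Finset.univ.filter (fun σ : Fin m → Bool => σ i = true),
      atomSet m E i σ) = Set.univ := by
  classical
  ext ω
  simp only [Set.mem_iUnion, Finset.mem_filter, Finset.mem_univ, true_and, Set.mem_univ,
    iff_true]
  refine ⟨fun k => if k = i then true else decide (ω ∈ E k), by simp, ?_⟩
  rw [atom_mem]
  intro k hk
  simp [hk]

end Aux

/-- Generalized second-order union bound: if each event `E i` has conditional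
probability at most `p i` given any configuration (occurrence/non-occurrence) of the
other events, then the probability that at least two of the events occur is at most
`∑_{i<j} p i * p j`. -/
theorem second_order_union_bound_conditional {Ω : Type*} [MeasurableSpace Ω]
    (μ : Measure Ω) [IsProbabilityMeasure μ] (m : ℕ) (p : Fin m → ℝ)
    (hp : ∀ i, 0 ≤ p i) (E : Fin m → Set Ω) (hmeas : ∀ i, MeasurableSet (E i))
    (hcond : ∀ (i : Fin m) (σ : Fin m → Bool),
      μ (E i ∩ ⋂ j ∈ Finset.univ.erase i, (if σ j then E j else (E j)ᶜ))
        ≤ ENNReal.ofReal (p i) *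
          μ (⋂ j ∈ Finset.univ.erase i, (if σ j then E j else (E j)ᶜ))) :
    μ {ω | ∃ i j : Fin m, i ≠ j ∧ ω ∈ E i ∧ ω ∈ E j}
      ≤ ENNReal.ofReal (∑ i : Fin m, ∑ j ∈ Finset.Ioi i, p i * p j) := by
  have hcond' : ∀ (i : Fin m) (σ : Fin m → Bool),
      μ (E i ∩ atomSet m E i σ) ≤ ENNReal.ofReal (p i) * μ (atomSet m E i σ) := hcond
  -- single event bound: μ (E j) ≤ p j
  have hsingle : ∀ j : Fin m, μ (E j) ≤ ENNReal.ofReal (p j) := by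
    intro j
    have h := key μ hmeas j (ENNReal.ofReal (p j)) (hcond' j)
      (Finset.univ.filter (fun σ : Fin m → Bool => σ j = true))
      (fun σ hσ => (Finset.mem_filter.mp hσ).2)
    rw [union_atoms_univ j, Set.inter_univ, measure_univ, mul_one] at h
    exact h
  -- pair bound
  have hpair : ∀ i j : Fin m, j ≠ i →
      μ (E i ∩ E j) ≤ ENNReal.ofReal (p i) * ENNReal.ofReal (p j) := by
    intro i j hij
    have h := key μ hmeas i (ENNReal.ofReal (p i)) (hcond' i)
      (Finset.univ.filter (fun σ : Fin m → Bool => σ i = true ∧ σ j = true))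
      (fun σ hσ => (Finset.mem_filter.mp hσ).2.1)
    rw [union_atoms_true hij] at h
    exact h.trans (mul_le_mul_right (hsingle j) _)
  -- cover by pairs
  have hsub : {ω | ∃ i j : Fin m, i ≠ j ∧ ω ∈ E i ∧ ω ∈ E j}
      ⊆ ⋃ i ∈ (Finset.univ : Finset (Fin m)), ⋃ j ∈ Finset.Ioi i, E i ∩ E j := by
    rintro ω ⟨i, j, hij, hi, hj⟩
    simp only [Set.mem_iUnion, Finset.mem_univ, Finset.mem_Ioi, true_and, exists_prop]
    rcases lt_or_gt_of_ne hij with h | h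
    · exact ⟨i, j, h, hi, hj⟩
    · exact ⟨j, i, h, hj, hi⟩
  calc μ {ω | ∃ i j : Fin m, i ≠ j ∧ ω ∈ E i ∧ ω ∈ E j}
      ≤ μ (⋃ i ∈ (Finset.univ : Finset (Fin m)), ⋃ j ∈ Finset.Ioi i, E i ∩ E j) :=
        measure_mono hsub
    _ ≤ ∑ i : Fin m, μ (⋃ j ∈ Finset.Ioi i, E i ∩ E j) := measure_biUnion_finset_le _ _
    _ ≤ ∑ i : Fin m, ∑ j ∈ Finset.Ioi i, μ (E i ∩ E j) :=
        Finset.sum_le_sum fun i _ => measure_biUnion_finset_le _ _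
    _ ≤ ∑ i : Fin m, ∑ j ∈ Finset.Ioi i, ENNReal.ofReal (p i * p j) := by
        apply Finset.sum_le_sum
        intro i _
        apply Finset.sum_le_sum
        intro j hj
        have hne : j ≠ i := (Finset.mem_Ioi.mp hj).ne'
        rw [ENNReal.ofReal_mul (hp i)]
        exact hpair i j hne
    _ = ENNReal.ofReal (∑ i : Fin m, ∑ j ∈ Finset.Ioi i, p i * p j) := by
        rw [ENNReal.ofReal_sum_of_nonneg fun i _ =>
          Finset.sum_nonneg fun j _ => mul_nonneg (hp i) (hp j)]
        exact Finset.sum_congr rfl fun i _ =>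
          (ENNReal.ofReal_sum_of_nonneg fun j _ => mul_nonneg (hp i) (hp j)).symm
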